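/- arXiv:1111.1469 — 3 statements merged into one kernel-verified Lean document; each statement's English description precedes it below -/
import Mathlib

section
/- Let X be a connected topological space with a measure μ that is positive on nonempty open sets, and let ψ₁, ψ₂ : X → ℝ be continuous. Suppose the complement of the zero set of ψ₁·ψ₂ is connected and nonempty. Then ∫ ψ₁ ψ₂ dμ ≠ 0 provided ψ₁ψ₂ is integrable. (Hence ψ₁ and ψ₂ cannot be orthogonal in L².) -/
open MeasureTheory

theorem stmt2 {X : Type*} [TopologicalSpace X] [ConnectedSpace X] [MeasurableSpace X]
    [BorelSpace X] (μ : Measure X)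
    (hμ : ∀ U : Set X, IsOpen U → U.Nonempty → 0 < μ U)
    (ψ₁ ψ₂ : X → ℝ) (h₁ : Continuous ψ₁) (h₂ : Continuous ψ₂)
    (hconn : IsConnected {x : X | ψ₁ x * ψ₂ x ≠ 0})
    (hint : Integrable (fun x => ψ₁ x * ψ₂ x) μ) :
    ∫ x, ψ₁ x * ψ₂ x ∂μ ≠ 0 := by
  set f : X → ℝ := fun x => ψ₁ x * ψ₂ x with hf
  have hfc : Continuous f := h₁.mul h₂
  set S : Set X := {x : X | f x ≠ 0} with hS
  have hSopen : IsOpen S := isOpen_ne_fun hfc continuous_const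
  have hSne : S.Nonempty := hconn.nonempty
  -- constant sign on S
  have hsign : (∀ x ∈ S, 0 < f x) ∨ (∀ x ∈ S, f x < 0) := by
    by_contra h
    push_neg at h
    obtain ⟨⟨a, ha, hfa⟩, ⟨b, hb, hfb⟩⟩ := h
    have hfa' : f a < 0 := lt_of_le_of_ne hfa ha
    have hfb' : 0 < f b := lt_of_le_of_ne hfb (Ne.symm hb)
    have himg : IsPreconnected (f '' S) := hconn.isPreconnected.image f hfc.continuousOn
    have : (0 : ℝ) ∈ f '' S := by
      have := himg.Icc_subset ⟨a, ha, rfl⟩ ⟨b, hb, rfl⟩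
      exact this ⟨le_of_lt hfa', le_of_lt hfb'⟩
    obtain ⟨x, hx, hx0⟩ := this
    exact hx hx0
  have hμS : 0 < μ S := hμ S hSopen hSne
  rcases hsign with hpos | hneg
  · have hnn : ∀ x, 0 ≤ f x := by
      intro x
      by_cases hx : f x = 0
      · exact le_of_eq hx.symm
      · exact le_of_lt (hpos x hx)
    have : 0 < ∫ x, f x ∂μ := by
      rw [integral_pos_iff_support_of_nonneg hnn hint]
      have : Function.support f = S := rfl
      rw [this]; exact hμS
    exact ne_of_gt this
  · have hnn : ∀ x, 0 ≤ -f x := by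
      intro x
      by_cases hx : f x = 0
      · simp [hx]
      · linarith [hneg x hx]
    have hint' : Integrable (fun x => -f x) μ := hint.neg
    have : 0 < ∫ x, -f x ∂μ := by
      rw [integral_pos_iff_support_of_nonneg hnn hint']
      have : Function.support (fun x => -f x) = S := by
        ext x; simp [S, Function.support]
      rw [this]; exact hμS
    rw [integral_neg] at this
    intro h
    rw [show (∫ x, f x ∂μ) = ∫ x, ψ₁ x * ψ₂ x ∂μ from rfl, h] at this
    simp at this
end

section
/- Let X be a connected topological space with a measure μ positive on nonempty open sets, and let T be a symmetric linear operator on a subspace of real L²(X, μ) in the sense that ⟨T f, g⟩ = ⟨f, T g⟩ for all f, g in its domain. Suppose ψ₁ and ψ₂ are continuous eigenfunctions of T with distinct eigenvalues λ₁ ≠ λ₂, ψ₁ψ₂ is integrable, and the complement of the zero set of ψ₁·ψ₂ is connected and nonempty. Then a contradiction follows; i.e., such a configuration is impossible. -/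
open MeasureTheory

lemma aux_pos {X : Type*} [TopologicalSpace X] [MeasurableSpace X] [BorelSpace X]
    (μ : Measure X) (hμ : ∀ U : Set X, IsOpen U → U.Nonempty → 0 < μ U)
    (f : X → ℝ) (hf : Continuous f) (hint : Integrable f μ)
    (hzero : ∫ x, f x ∂μ = 0) (hconn : IsPreconnected {x : X | f x ≠ 0})
    (x₀ : X) (hx₀ : 0 < f x₀) : False := by
  set S : Set X := {x : X | f x ≠ 0} with hS
  have hSopen : IsOpen S := isOpen_ne_fun hf continuous_const
  have hx₀S : x₀ ∈ S := ne_of_gt hx₀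
  have hnonneg : ∀ x, 0 ≤ f x := by
    intro x
    by_contra h
    push_neg at h
    have hxS : x ∈ S := ne_of_lt h
    have := hconn.intermediate_value hxS hx₀S hf.continuousOn
    have h0 : (0 : ℝ) ∈ Set.Icc (f x) (f x₀) := ⟨le_of_lt h, le_of_lt hx₀⟩
    obtain ⟨y, hyS, hy⟩ := this h0
    exact hyS hy
  have hsupp : Function.support f = S := rfl
  have hpos : 0 < ∫ x, f x ∂μ := by
    rw [integral_pos_iff_support_of_nonneg hnonneg hint, hsupp]
    exact hμ S hSopen ⟨x₀, hx₀S⟩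
  exact absurd hzero (ne_of_gt hpos)

theorem stmt4 {X : Type*} [TopologicalSpace X] [ConnectedSpace X] [MeasurableSpace X]
    [BorelSpace X] (μ : Measure X)
    (hμ : ∀ U : Set X, IsOpen U → U.Nonempty → 0 < μ U)
    (D : Submodule ℝ (X → ℝ)) (T : D →ₗ[ℝ] X → ℝ)
    (hsymm : ∀ f g : D, ∫ x, T f x * (g : X → ℝ) x ∂μ = ∫ x, (f : X → ℝ) x * T g x ∂μ)
    (ψ₁ ψ₂ : D) (l₁ l₂ : ℝ) (hne : l₁ ≠ l₂)
    (h₁c : Continuous (ψ₁ : X → ℝ)) (h₂c : Continuous (ψ₂ : X → ℝ))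
    (he₁ : T ψ₁ = l₁ • (ψ₁ : X → ℝ)) (he₂ : T ψ₂ = l₂ • (ψ₂ : X → ℝ))
    (hint : Integrable (fun x => (ψ₁ : X → ℝ) x * (ψ₂ : X → ℝ) x) μ)
    (hconn : IsConnected {x : X | (ψ₁ : X → ℝ) x * (ψ₂ : X → ℝ) x ≠ 0}) :
    False := by
  set f : X → ℝ := fun x => (ψ₁ : X → ℝ) x * (ψ₂ : X → ℝ) x with hf
  have hfc : Continuous f := h₁c.mul h₂c
  -- integral of f is zero
  have hI : ∫ x, f x ∂μ = 0 := by
    have h := hsymm ψ₁ ψ₂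
    rw [he₁, he₂] at h
    simp only [Pi.smul_apply, smul_eq_mul] at h
    rw [show (∫ x, l₁ * (ψ₁ : X → ℝ) x * (ψ₂ : X → ℝ) x ∂μ)
          = l₁ * ∫ x, f x ∂μ by
        rw [← integral_const_mul]; congr 1; ext x; ring,
      show (∫ x, (ψ₁ : X → ℝ) x * (l₂ * (ψ₂ : X → ℝ) x) ∂μ)
          = l₂ * ∫ x, f x ∂μ by
        rw [← integral_const_mul]; congr 1; ext x; ring] at h
    have : (l₁ - l₂) * ∫ x, f x ∂μ = 0 := by ring_nf; linarith
    rcases mul_eq_zero.1 this with h' | h'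
    · exact absurd (sub_eq_zero.1 h') hne
    · exact h'
  obtain ⟨x₀, hx₀⟩ := hconn.nonempty
  rcases lt_or_gt_of_ne (Set.mem_setOf.1 hx₀) with hlt | hgt
  · exact aux_pos μ hμ (fun x => -f x) hfc.neg hint.neg
      (by rw [integral_neg, hI, neg_zero])
      (by simp only [neg_ne_zero]; exact hconn.isPreconnected)
      x₀ (by simpa using hlt)
  · exact aux_pos μ hμ f hfc hint hI hconn.isPreconnected x₀ hgt
end

section
/- Let X be a connected topological space with measure μ positive on nonempty open sets. There do not exist two continuous functions ψ₁, ψ₂ : X → ℝ, each not identically zero, such that ψ₁ψ₂ is integrable with ∫ ψ₁ ψ₂ dμ = 0, and the complement of the zero set of ψ₁·ψ₂ is connected and nonempty. -/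
open MeasureTheory

lemma aux_stmt8 {X : Type*} [TopologicalSpace X] [MeasurableSpace X]
    [BorelSpace X] (μ : Measure X)
    (hμ : ∀ U : Set X, IsOpen U → U.Nonempty → 0 < μ U) {f : X → ℝ}
    (hc : Continuous f) (hint : Integrable f μ) (hz : ∫ x, f x ∂μ = 0)
    (hnn : ∀ x, 0 ≤ f x) (hne : ∃ x, f x ≠ 0) : False := by
  have hae : f =ᵐ[μ] 0 := (integral_eq_zero_iff_of_nonneg hnn hint).mp hz
  obtain ⟨x, hx⟩ := hne
  have hopen : IsOpen {x | f x ≠ 0} := isOpen_ne.preimage hc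
  have hpos := hμ _ hopen ⟨x, hx⟩
  rw [Filter.EventuallyEq, ae_iff] at hae
  simp only [Pi.zero_apply] at hae
  exact absurd hae hpos.ne'

theorem stmt8 {X : Type*} [TopologicalSpace X] [ConnectedSpace X] [MeasurableSpace X]
    [BorelSpace X] (μ : Measure X)
    (hμ : ∀ U : Set X, IsOpen U → U.Nonempty → 0 < μ U) :
    ¬ ∃ ψ₁ ψ₂ : X → ℝ, Continuous ψ₁ ∧ Continuous ψ₂ ∧
      (∃ x, ψ₁ x ≠ 0) ∧ (∃ x, ψ₂ x ≠ 0) ∧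
      Integrable (fun x => ψ₁ x * ψ₂ x) μ ∧
      (∫ x, ψ₁ x * ψ₂ x ∂μ) = 0 ∧
      IsConnected {x : X | ψ₁ x * ψ₂ x ≠ 0} := by
  rintro ⟨ψ₁, ψ₂, h₁, h₂, -, -, hint, hzero, hconn⟩
  set f := fun x => ψ₁ x * ψ₂ x with hf
  have hfc : Continuous f := h₁.mul h₂
  have hsign : (∀ x ∈ {x | f x ≠ 0}, 0 < f x) ∨ (∀ x ∈ {x | f x ≠ 0}, f x < 0) := by
    by_contra h
    push_neg at h
    obtain ⟨⟨a, ha, hfa⟩, ⟨b, hb, hfb⟩⟩ := h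
    have hfa' : f a < 0 := lt_of_le_of_ne hfa ha
    have hfb' : 0 < f b := lt_of_le_of_ne hfb (Ne.symm hb)
    have h0 : (0 : ℝ) ∈ Set.Icc (f a) (f b) := ⟨hfa'.le, hfb'.le⟩
    obtain ⟨c, hc, hfc0⟩ :=
      hconn.isPreconnected.intermediate_value ha hb hfc.continuousOn h0
    exact hc hfc0
  rcases hsign with hpos | hneg
  · exact aux_stmt8 μ hμ hfc hint hzero
      (fun x => by
        by_cases hx : f x = 0
        · exact hx.ge
        · exact (hpos x hx).le)
      ⟨_, hconn.nonempty.choose_spec⟩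
  · refine aux_stmt8 μ hμ (f := fun x => -f x) hfc.neg hint.neg (by rw [integral_neg, hzero, neg_zero])
      (fun x => by
        by_cases hx : f x = 0
        · simp [hx]
        · exact (neg_pos.mpr (hneg x hx)).le)
      ?_
    obtain ⟨x, hx⟩ := hconn.nonempty
    exact ⟨x, neg_ne_zero.mpr hx⟩
end
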